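/- Let d ≥ 1, N ≥ 1, and let φ : [0,1]^d → ℂ^N be continuous. Let n := dim_ℂ span_ℂ{ φ(x)φ(x)* : x ∈ [0,1]^d } ⊆ ℂ^{N×N}. Then there exist a point z ∈ [0,1]^d and a probability measure Q̃ on [0,1]^d whose moment matrix matches that of the uniform distribution, i.e., ∫ φ(x)φ(x)* dQ̃(x) = ∫_{[0,1]^d} φ(x)φ(x)* dx, such that for the function f(x) := Σ_{i=1}^d cos(2π(x_i − z_i)), for every β > 0 and every bounded measurable g : [0,1]^d → ℝ: log( ∫ exp(g(x)) dQ̃(x) ) − log( ∫_{[0,1]^d} exp(β·f(x)) dx ) ≥ log( β^{d/2} / (2n+1) ) − ‖g − β·f‖_∞. In particular, any moment-matrix-based relaxation whose value upper-bounds sup over moment-matched measures Q̃ of log ∫ e^g dQ̃ must overestimate the log-partition function L_{βf} by at least log(β^{d/2}/(2n+1)) − ‖g − βf‖_∞. -/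

import Mathlib

open MeasureTheory Real

noncomputable section

/-- The unit cube `[0,1]^d` in `ℝ^d`. -/
def cube (d : ℕ) : Set (Fin d → ℝ) := Set.Icc 0 1

/-- The rank-one "outer product" feature matrix `φ(x) φ(x)^* ∈ ℂ^{N×N}`. -/
def outerFeat {d N : ℕ} (φ : (Fin d → ℝ) → (Fin N → ℂ)) (x : Fin d → ℝ) :
    Matrix (Fin N) (Fin N) ℂ :=
  Matrix.of fun i j => φ x i * (starRingEnd ℂ) (φ x j)

lemma coslem (t : ℝ) (ht : |t| ≤ 1/2) : Real.cos (2*π*t) ≤ 1 - 8*t^2 := by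
  have h1 : Real.sin (π*t)^2 = 1/2 - Real.cos (2*(π*t))/2 := Real.sin_sq_eq_half_sub _
  have habs : Real.sin (π*t)^2 = Real.sin (π*|t|)^2 := by
    rcases abs_cases t with ⟨h, _⟩ | ⟨h, _⟩
    · rw [h]
    · rw [h, mul_neg, Real.sin_neg]; ring
  have hπ : (0:ℝ) < π := Real.pi_pos
  have h2 : 2/π * (π*|t|) ≤ Real.sin (π*|t|) := by
    apply Real.mul_le_sin (by positivity)
    calc π * |t| ≤ π * (1/2) := by nlinarith [abs_nonneg t]
    _ = π/2 := by ring
  have h3 : 2/π * (π*|t|) = 2*|t| := by field_simp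
  rw [h3] at h2
  have h4 : (2*|t|)^2 ≤ Real.sin (π*|t|)^2 := by
    have := abs_nonneg t
    nlinarith
  have h5 : t^2 = |t|^2 := (sq_abs t).symm
  have h6 : Real.cos (2*(π*t)) = Real.cos (2*π*t) := by ring_nf
  nlinarith [h4, habs, h1]

lemma oneDim {β : ℝ} (hβ : 0 < β) (c : ℝ) :
    ∫ t in Set.Icc (0:ℝ) 1, Real.exp (β * Real.cos (2*π*(t - c)))
      ≤ Real.exp β * β ^ (-(1:ℝ)/2) := by
  have hcont : Continuous fun t : ℝ => Real.exp (β * Real.cos (2*π*t)) := by continuity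
  have hper : Function.Periodic (fun t : ℝ => Real.exp (β * Real.cos (2*π*t))) 1 := by
    intro t
    simp only
    rw [show 2*π*(t+1) = 2*π*t + 2*π by ring, Real.cos_add_two_pi]
  -- set integral to interval integral
  have h0 : (∫ t in Set.Icc (0:ℝ) 1, Real.exp (β * Real.cos (2*π*(t - c))))
      = ∫ t in (0:ℝ)..1, Real.exp (β * Real.cos (2*π*(t - c))) := by
    rw [intervalIntegral.integral_of_le zero_le_one, MeasureTheory.integral_Icc_eq_integral_Ioc]
  have h1 : (∫ t in (0:ℝ)..1, Real.exp (β * Real.cos (2*π*(t - c))))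
      = ∫ t in (0-c)..(1-c), Real.exp (β * Real.cos (2*π*t)) :=
    intervalIntegral.integral_comp_sub_right (fun t => Real.exp (β * Real.cos (2*π*t))) c
  have h2 : (∫ t in (0-c)..(1-c), Real.exp (β * Real.cos (2*π*t)))
      = ∫ t in (-(1/2) : ℝ)..(1/2), Real.exp (β * Real.cos (2*π*t)) := by
    have := hper.intervalIntegral_add_eq (0-c) (-(1/2))
    rw [show (0-c)+1 = 1-c by ring, show (-(1/2):ℝ)+1 = 1/2 by ring] at this
    exact this
  have h3 : (∫ t in (-(1/2) : ℝ)..(1/2), Real.exp (β * Real.cos (2*π*t)))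
      ≤ ∫ t in (-(1/2) : ℝ)..(1/2), Real.exp β * Real.exp (-(8*β) * t^2) := by
    apply intervalIntegral.integral_mono_on (by norm_num)
    · exact (hcont.intervalIntegrable _ _)
    · exact ((continuous_const.mul ((continuous_const.mul (continuous_pow 2)).rexp)).intervalIntegrable _ _)
    · intro t ht
      rw [← Real.exp_add]
      apply Real.exp_le_exp.2
      have habs : |t| ≤ 1/2 := abs_le.2 ⟨ht.1, ht.2⟩
      have := coslem t habs
      nlinarith
  have h4 : (∫ t in (-(1/2) : ℝ)..(1/2), Real.exp β * Real.exp (-(8*β) * t^2))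
      ≤ Real.exp β * Real.sqrt (π / (8*β)) := by
    rw [intervalIntegral.integral_const_mul]
    have hint : Integrable (fun t : ℝ => Real.exp (-(8*β) * t^2)) := by
      simpa using integrable_exp_neg_mul_sq (by linarith : (0:ℝ) < 8*β)
    have hle : (∫ t in (-(1/2) : ℝ)..(1/2), Real.exp (-(8*β) * t^2))
        ≤ ∫ t : ℝ, Real.exp (-(8*β) * t^2) := by
      rw [intervalIntegral.integral_of_le (by norm_num)]
      apply MeasureTheory.setIntegral_le_integral hint
      filter_upwards with t using (Real.exp_pos _).le
    have hg : (∫ t : ℝ, Real.exp (-(8*β) * t^2)) = Real.sqrt (π / (8*β)) :=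
      integral_gaussian (8*β)
    rw [hg] at hle
    exact mul_le_mul_of_nonneg_left hle (Real.exp_pos _).le
  have h5 : Real.sqrt (π / (8*β)) ≤ β ^ (-(1:ℝ)/2) := by
    have h6 : π / (8*β) ≤ 1/β := by
      rw [div_le_div_iff₀ (by positivity) hβ]
      nlinarith [Real.pi_le_four]
    have h7 : Real.sqrt (π / (8*β)) ≤ Real.sqrt (1/β) := Real.sqrt_le_sqrt h6
    have h8 : Real.sqrt (1/β) = β ^ (-(1:ℝ)/2) := by
      rw [one_div, Real.sqrt_inv, Real.sqrt_eq_rpow, ← Real.rpow_neg hβ.le]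
      norm_num
    linarith
  calc (∫ t in Set.Icc (0:ℝ) 1, Real.exp (β * Real.cos (2*π*(t - c))))
      ≤ Real.exp β * Real.sqrt (π / (8*β)) := by rw [h0, h1, h2]; linarith
    _ ≤ Real.exp β * β ^ (-(1:ℝ)/2) := mul_le_mul_of_nonneg_left h5 (Real.exp_pos _).le

lemma cube_eq_pi (d : ℕ) : cube d = Set.pi Set.univ (fun _ : Fin d => Set.Icc (0:ℝ) 1) := by
  rw [cube, ← Set.pi_univ_Icc]; rfl

lemma volume_cube (d : ℕ) : (volume (cube d)) = 1 := by
  rw [cube, Real.volume_Icc_pi]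
  simp

lemma cubeBound {d : ℕ} {β : ℝ} (hβ : 0 < β) (z : Fin d → ℝ) :
    ∫ x in cube d, Real.exp (β * ∑ i, Real.cos (2 * π * (x i - z i)))
      ≤ (Real.exp β * β ^ (-(1:ℝ)/2))^d := by
  have key : (∫ x in cube d, Real.exp (β * ∑ i, Real.cos (2 * π * (x i - z i))))
      = ∏ i : Fin d, ∫ t in Set.Icc (0:ℝ) 1, Real.exp (β * Real.cos (2*π*(t - z i))) := by
    rw [← MeasureTheory.integral_indicator (by exact measurableSet_Icc)]
    have heq : (cube d).indicator (fun x => Real.exp (β * ∑ i, Real.cos (2 * π * (x i - z i))))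
        = fun x => ∏ i : Fin d,
            (Set.Icc (0:ℝ) 1).indicator (fun t => Real.exp (β * Real.cos (2*π*(t - z i)))) (x i) := by
      funext x
      by_cases hx : x ∈ cube d
      · rw [Set.indicator_of_mem hx]
        have hxi : ∀ i, x i ∈ Set.Icc (0:ℝ) 1 := by
          rw [cube_eq_pi] at hx
          exact fun i => hx i (Set.mem_univ i)
        rw [Finset.mul_sum, Real.exp_sum]
        exact Finset.prod_congr rfl fun i _ => (Set.indicator_of_mem (hxi i) (fun t => Real.exp (β * Real.cos (2*π*(t - z i))))).symm
      · rw [Set.indicator_of_notMem hx]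
        rw [cube_eq_pi, Set.mem_pi] at hx
        push_neg at hx
        obtain ⟨i, _, hi⟩ := hx
        exact (Finset.prod_eq_zero (Finset.mem_univ i) (Set.indicator_of_notMem hi _)).symm
    rw [heq, MeasureTheory.integral_fintype_prod_volume_eq_prod
      (f := fun i t => (Set.Icc (0:ℝ) 1).indicator (fun s => Real.exp (β * Real.cos (2*π*(s - z i)))) t)]
    exact Finset.prod_congr rfl fun i _ => by
      rw [MeasureTheory.integral_indicator (by exact measurableSet_Icc)]
  rw [key]
  calc ∏ i : Fin d, ∫ t in Set.Icc (0:ℝ) 1, Real.exp (β * Real.cos (2*π*(t - z i)))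
      ≤ ∏ _i : Fin d, (Real.exp β * β ^ (-(1:ℝ)/2)) := by
        apply Finset.prod_le_prod
        · intro i _
          apply MeasureTheory.setIntegral_nonneg measurableSet_Icc
          intro t _
          exact (Real.exp_pos _).le
        · intro i _
          exact oneDim hβ (z i)
    _ = (Real.exp β * β ^ (-(1:ℝ)/2))^d := by rw [Finset.prod_const, Finset.card_univ, Fintype.card_fin]

lemma cubePos {d : ℕ} {β : ℝ} (hβ : 0 < β) (z : Fin d → ℝ) :
    Real.exp (-(β * d)) ≤ ∫ x in cube d, Real.exp (β * ∑ i, Real.cos (2 * π * (x i - z i))) := by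
  have hcont : Continuous fun x : Fin d → ℝ => Real.exp (β * ∑ i, Real.cos (2 * π * (x i - z i))) := by
    apply Real.continuous_exp.comp
    apply continuous_const.mul
    apply continuous_finset_sum
    intro i _
    exact Real.continuous_cos.comp (continuous_const.mul ((continuous_apply i).sub continuous_const))
  have hint : IntegrableOn (fun x : Fin d → ℝ => Real.exp (β * ∑ i, Real.cos (2 * π * (x i - z i)))) (cube d) := by
    apply hcont.continuousOn.integrableOn_compact
    exact isCompact_Icc
  have h := MeasureTheory.setIntegral_ge_of_const_le (μ := volume) (s := cube d)
    (by exact measurableSet_Icc) (by rw [volume_cube]; exact ENNReal.one_ne_top)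
    (c := Real.exp (-(β * d)))
    (fun x hx => by
      apply Real.exp_le_exp.2
      have : (-(d:ℝ)) ≤ ∑ i, Real.cos (2 * π * (x i - z i)) := by
        have : ∀ i ∈ Finset.univ, (-1:ℝ) ≤ Real.cos (2 * π * (x i - z i)) :=
          fun i _ => Real.neg_one_le_cos _
        calc (-(d:ℝ)) = ∑ _i : Fin d, (-1:ℝ) := by simp
          _ ≤ _ := Finset.sum_le_sum this
      nlinarith) hint
  calc Real.exp (-(β * d)) = Real.exp (-(β * d)) * (volume (cube d)).toReal := by
        rw [volume_cube]; simp
    _ ≤ _ := by rw [mul_comm]; exact h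

lemma sum_extend_emb {ι κ M : Type*} [Fintype ι] [Fintype κ] [AddCommMonoid M]
    [DecidableEq κ] (e : ι ↪ κ) (f : ι → M) :
    (∑ j : κ, if h : ∃ i, e i = j then f h.choose else 0) = ∑ i, f i := by
  have hchoose : ∀ i : ι, (⟨i, rfl⟩ : ∃ i', e i' = e i).choose = i := fun i =>
    e.injective (⟨i, rfl⟩ : ∃ i', e i' = e i).choose_spec
  rw [show (∑ j : κ, if h : ∃ i, e i = j then f h.choose else 0)
      = ∑ j ∈ Finset.univ.image e, (if h : ∃ i, e i = j then f h.choose else 0) by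
    refine (Finset.sum_subset (Finset.subset_univ _) ?_).symm
    intro j _ hj
    rw [dif_neg]
    rintro ⟨i, rfl⟩
    exact hj (Finset.mem_image_of_mem e (Finset.mem_univ i))]
  rw [Finset.sum_image (fun i _ j _ h => e.injective h)]
  refine Finset.sum_congr rfl fun i _ => ?_
  rw [dif_pos ⟨i, rfl⟩]
  congr 1
  exact e.injective (⟨i, rfl⟩ : ∃ i', e i' = e i).choose_spec

section ConvexAux
variable {E : Type} [NormedAddCommGroup E] [NormedSpace ℝ E] [FiniteDimensional ℝ E]

lemma pad_convex_combo {K : Set E} (hne : K.Nonempty) {x : E} (hx : x ∈ convexHull ℝ K)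
    (D : ℕ) (hD : Module.finrank ℝ E ≤ D) :
    ∃ (w : Fin (D+1) → ℝ) (v : Fin (D+1) → E), (∀ j, 0 ≤ w j) ∧ (∑ j, w j = 1) ∧
      (∀ j, v j ∈ K) ∧ ∑ j, w j • v j = x := by
  obtain ⟨ι, hfin, z, w, hzK, hai, hwpos, hwsum, hcomb⟩ :=
    eq_pos_convex_span_of_mem_convexHull hx
  letI := hfin
  haveI : Nonempty ι := by
    by_contra h
    rw [not_nonempty_iff] at h
    rw [Finset.sum_of_isEmpty] at hwsum
    norm_num at hwsum
  have hcard : Fintype.card ι ≤ D + 1 := by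
    have h1 := hai.finrank_vectorSpan_add_one
    have h2 : Module.finrank ℝ (vectorSpan ℝ (Set.range z)) ≤ Module.finrank ℝ E :=
      Submodule.finrank_le _
    omega
  obtain ⟨e⟩ : Nonempty (ι ↪ Fin (D+1)) :=
    Function.Embedding.nonempty_of_card_le (by simpa using hcard)
  classical
  refine ⟨fun j => if h : ∃ i, e i = j then w h.choose else 0,
    fun j => if h : ∃ i, e i = j then z h.choose else hne.choose, ?_, ?_, ?_, ?_⟩
  · intro j
    by_cases h : ∃ i, e i = j <;> simp [h, (hwpos _).le]
  · rw [sum_extend_emb e w]; exact hwsum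
  · intro j
    by_cases h : ∃ i, e i = j
    · simp only [dif_pos h]; exact hzK (Set.mem_range_self _)
    · simp only [dif_neg h]; exact hne.choose_spec
  · rw [show (∑ j : Fin (D+1), (if h : ∃ i, e i = j then w h.choose else 0) •
        (if h : ∃ i, e i = j then z h.choose else hne.choose))
      = ∑ j : Fin (D+1), (if h : ∃ i, e i = j then w h.choose • z h.choose else 0) by
      refine Finset.sum_congr rfl fun j _ => ?_
      by_cases h : ∃ i, e i = j <;> simp [h]]
    rw [sum_extend_emb e (fun i => w i • z i)]
    exact hcomb

lemma isClosed_convexHull_of_isCompact {K : Set E} (hK : IsCompact K) :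
    IsClosed (convexHull ℝ K) := by
  rcases K.eq_empty_or_nonempty with rfl | hne
  · rw [convexHull_empty]; exact isClosed_empty
  set D := Module.finrank ℝ E
  set S : Set ((Fin (D+1) → ℝ) × (Fin (D+1) → E)) :=
    (stdSimplex ℝ (Fin (D+1))) ×ˢ (Set.univ.pi fun _ => K) with hS
  have hScomp : IsCompact S :=
    (isCompact_stdSimplex _ _).prod (isCompact_univ_pi fun _ => hK)
  have hΦ : Continuous (fun p : (Fin (D+1) → ℝ) × (Fin (D+1) → E) => ∑ j, p.1 j • p.2 j) := by
    apply continuous_finset_sum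
    intro j _
    exact ((continuous_apply j).comp continuous_fst).smul ((continuous_apply j).comp continuous_snd)
  have himg : convexHull ℝ K = (fun p : (Fin (D+1) → ℝ) × (Fin (D+1) → E) => ∑ j, p.1 j • p.2 j) '' S := by
    apply Set.Subset.antisymm
    · intro x hx
      obtain ⟨w, v, hw0, hw1, hvK, hsum⟩ := pad_convex_combo hne hx D le_rfl
      exact ⟨(w, v), ⟨⟨hw0, hw1⟩, fun j _ => hvK j⟩, hsum⟩
    · rintro _ ⟨⟨w, v⟩, ⟨⟨hw0, hw1⟩, hv⟩, rfl⟩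
      exact (convex_convexHull ℝ K).sum_mem (fun j _ => hw0 j) hw1
        (fun j _ => subset_convexHull ℝ K (hv j (Set.mem_univ j)))
  rw [himg]
  exact (hScomp.image hΦ).isClosed

end ConvexAux

lemma integral_atomic {α E : Type*} [MeasurableSpace α] [MeasurableSingletonClass α]
    [NormedAddCommGroup E] [NormedSpace ℝ E] [CompleteSpace E] {ι : Type*} [Fintype ι]
    (w : ι → ℝ) (hw : ∀ i, 0 ≤ w i) (pt : ι → α) (f : α → E) :
    ∫ x, f x ∂(∑ i : ι, ENNReal.ofReal (w i) • Measure.dirac (pt i))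
      = ∑ i : ι, w i • f (pt i) := by
  rw [MeasureTheory.integral_finset_sum_measure]
  · refine Finset.sum_congr rfl fun i _ => ?_
    rw [MeasureTheory.integral_smul_measure, MeasureTheory.integral_dirac,
      ENNReal.toReal_ofReal (hw i)]
  · intro i _
    exact ((integrable_const (f (pt i))).congr (MeasureTheory.ae_eq_dirac f).symm).smul_measure
      ENNReal.ofReal_ne_top

/-- matrix/pi linear equivalence -/
def mEquiv (N : ℕ) : (Fin N → Fin N → ℂ) ≃ₗ[ℂ] Matrix (Fin N) (Fin N) ℂ where
  toFun := Matrix.of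
  invFun := Matrix.of.symm
  left_inv := fun _ => rfl
  right_inv := fun _ => rfl
  map_add' := fun _ _ => rfl
  map_smul' := fun _ _ => rfl

/-- Theorem 4.9, lower bound for the OPT relaxation.
Let `φ : [0,1]^d → ℂ^N` be continuous and let `n` be the complex dimension of
`span{φ(x)φ(x)^* : x ∈ [0,1]^d}`. Then there exist `z ∈ [0,1]^d` and a probability measure
`Q̃` on `[0,1]^d` whose moment matrix matches that of the uniform distribution, such that for
`f(x) = ∑_i cos(2π(x_i − z_i))`, every `β > 0`, and every bounded measurable `g`:
`log(∫ e^g dQ̃) − L_{βf} ≥ log(β^{d/2}/(2n+1)) − ‖g − βf‖_∞`. -/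
theorem lopt_relaxation_lower_bound (d N : ℕ) (hd : 1 ≤ d) (hN : 1 ≤ N)
    (φ : (Fin d → ℝ) → (Fin N → ℂ)) (hφ : Continuous φ)
    (n : ℕ) (hn : n = Module.finrank ℂ (Submodule.span ℂ (outerFeat φ '' cube d))) :
    ∃ z ∈ cube d, ∃ Qt : Measure (Fin d → ℝ),
      IsProbabilityMeasure Qt ∧ Qt (cube d)ᶜ = 0 ∧
      (∀ i j : Fin N,
        (∫ x, outerFeat φ x i j ∂Qt) = ∫ x in cube d, outerFeat φ x i j) ∧
      (∀ β : ℝ, 0 < β → ∀ g : (Fin d → ℝ) → ℝ, Measurable g → (∃ C, ∀ x, |g x| ≤ C) →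
        Real.log (β ^ ((d : ℝ) / 2) / (2 * n + 1))
            - (⨆ x : cube d, |g x.1 - β * ∑ i, Real.cos (2 * Real.pi * (x.1 i - z i))|) ≤
          Real.log (∫ x, Real.exp (g x) ∂Qt)
            - Real.log (∫ x in cube d,
                Real.exp (β * ∑ i, Real.cos (2 * Real.pi * (x i - z i))))) := by
  classical
  set P := Fin N → Fin N → ℂ with hP
  set F : (Fin d → ℝ) → P := fun x i j => φ x i * (starRingEnd ℂ) (φ x j) with hF
  have hFcont : Continuous F := by
    apply continuous_pi; intro i; apply continuous_pi; intro j
    exact ((continuous_apply i).comp hφ).mul (continuous_star.comp ((continuous_apply j).comp hφ))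
  set K : Set P := F '' cube d with hK
  have hcubecomp : IsCompact (cube d) := isCompact_Icc
  have hKcomp : IsCompact K := hcubecomp.image hFcont
  -- the span dimension over ℝ
  have hnK : n = Module.finrank ℂ (Submodule.span ℂ K) := by
    rw [hn]
    have himg : outerFeat φ '' cube d = (mEquiv N) '' (F '' cube d) := by
      rw [Set.image_image]
      rfl
    rw [himg, show ⇑(mEquiv N) = ⇑((mEquiv N).toLinearMap) from rfl, Submodule.span_image]
    exact LinearEquiv.finrank_map_eq (mEquiv N) (Submodule.span ℂ (F '' cube d))
  -- uniform measure is a probability measure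
  haveI hPM : IsProbabilityMeasure (volume.restrict (cube d)) := by
    constructor
    rw [Measure.restrict_apply_univ, volume_cube]
  -- barycenter in convex hull
  have hInt : IntegrableOn F (cube d) := hFcont.continuousOn.integrableOn_compact hcubecomp
  have hb : (∫ x in cube d, F x) ∈ convexHull ℝ K := by
    apply Convex.integral_mem (convex_convexHull ℝ K)
      (isClosed_convexHull_of_isCompact hKcomp)
    · filter_upwards [ae_restrict_mem (measurableSet_Icc : MeasurableSet (cube d))] with x hx
      exact subset_convexHull ℝ K ⟨x, hx, rfl⟩
    · exact hInt
  obtain ⟨ι, hfin, zs, w, hzK, hai, hwpos, hwsum, hcomb⟩ :=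
    eq_pos_convex_span_of_mem_convexHull hb
  letI := hfin
  haveI : Nonempty ι := by
    by_contra h
    rw [not_nonempty_iff] at h
    rw [Finset.sum_of_isEmpty] at hwsum
    norm_num at hwsum
  -- cardinality bound
  have hcard : Fintype.card ι ≤ 2 * n + 1 := by
    have h1 := hai.finrank_vectorSpan_add_one
    set V : Submodule ℝ P := Submodule.restrictScalars ℝ (Submodule.span ℂ K) with hV
    have hsub : vectorSpan ℝ (Set.range zs) ≤ V := by
      rw [vectorSpan_def]
      apply Submodule.span_le.2
      rintro v hv
      obtain ⟨a, ha, b, hb, rfl⟩ := Set.mem_sub.1 hv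
      obtain ⟨ia, rfl⟩ := ha
      obtain ⟨ib, rfl⟩ := hb
      exact sub_mem (Submodule.subset_span (hzK (Set.mem_range_self ia)))
        (Submodule.subset_span (hzK (Set.mem_range_self ib)))
    have h2 : Module.finrank ℝ (vectorSpan ℝ (Set.range zs)) ≤ Module.finrank ℝ V :=
      Submodule.finrank_mono hsub
    have h3 : Module.finrank ℝ V = 2 * n := by
      have e1 : Module.finrank ℝ V = Module.finrank ℝ (Submodule.span ℂ K) :=
        LinearEquiv.finrank_eq
          ((Submodule.restrictScalarsEquiv ℝ ℂ (Fin N → Fin N → ℂ)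
            (Submodule.span ℂ K)).restrictScalars ℝ)
      have e2 : Module.finrank ℝ ℂ * Module.finrank ℂ (Submodule.span ℂ K)
          = Module.finrank ℝ (Submodule.span ℂ K) := Module.finrank_mul_finrank ℝ ℂ _
      rw [e1, ← e2, Complex.finrank_real_complex, hnK]
    have h1' : Module.finrank ℝ (vectorSpan ℝ (Set.range zs)) + 1 = Fintype.card ι := h1
    omega
  -- choose preimage points
  have hpt : ∀ i : ι, ∃ p, p ∈ cube d ∧ F p = zs i := by
    intro i
    obtain ⟨p, hp, hpe⟩ := hzK (Set.mem_range_self i)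
    exact ⟨p, hp, hpe⟩
  choose pt hptc hpte using hpt
  -- max weight
  obtain ⟨i₀, _, hmax⟩ := Finset.exists_max_image Finset.univ w Finset.univ_nonempty
  have hwi₀ : (1:ℝ) / (2 * n + 1) ≤ w i₀ := by
    have hsle : (1:ℝ) ≤ (Fintype.card ι) * w i₀ := by
      rw [← hwsum]
      calc ∑ i, w i ≤ ∑ _i : ι, w i₀ :=
            Finset.sum_le_sum fun i _ => hmax i (Finset.mem_univ i)
        _ = (Fintype.card ι) * w i₀ := by rw [Finset.sum_const, Finset.card_univ, nsmul_eq_mul]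
    have hc : ((Fintype.card ι : ℝ)) ≤ 2 * n + 1 := by exact_mod_cast hcard
    have hw0 : 0 < w i₀ := hwpos i₀
    rw [div_le_iff₀ (by positivity)]
    nlinarith
  set z := pt i₀ with hz
  refine ⟨z, hptc i₀, ∑ i : ι, ENNReal.ofReal (w i) • Measure.dirac (pt i), ?_, ?_, ?_, ?_⟩
  · constructor
    rw [Measure.finset_sum_apply]
    simp only [Measure.smul_apply, measure_univ, smul_eq_mul, mul_one]
    rw [← ENNReal.ofReal_sum_of_nonneg (fun i _ => (hwpos i).le), hwsum, ENNReal.ofReal_one]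
  · rw [Measure.finset_sum_apply]
    apply Finset.sum_eq_zero
    intro i _
    rw [Measure.smul_apply, Measure.dirac_apply,
      Set.indicator_of_notMem (Set.notMem_compl_iff.2 (hptc i))]
    simp
  · intro i j
    have hL : ∀ (v : P), v i j =
        ((ContinuousLinearMap.proj (R := ℝ) (φ := fun _ : Fin N => ℂ) j).comp
          (ContinuousLinearMap.proj (R := ℝ) (φ := fun _ : Fin N => Fin N → ℂ) i)) v := fun _ => rfl
    set L := ((ContinuousLinearMap.proj (R := ℝ) (φ := fun _ : Fin N => ℂ) j).comp
          (ContinuousLinearMap.proj (R := ℝ) (φ := fun _ : Fin N => Fin N → ℂ) i)) with hLdef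
    have lhs : (∫ x, outerFeat φ x i j ∂(∑ i : ι, ENNReal.ofReal (w i) • Measure.dirac (pt i)))
        = ∑ k : ι, w k • (zs k i j) := by
      have : (fun x => outerFeat φ x i j) = fun x => F x i j := rfl
      rw [this, integral_atomic w (fun i => (hwpos i).le) pt (fun x => F x i j)]
      exact Finset.sum_congr rfl fun k _ => by rw [hpte k]
    have rhs : (∫ x in cube d, outerFeat φ x i j) = ∑ k : ι, w k • (zs k i j) := by
      have h1 : (∫ x in cube d, outerFeat φ x i j) = L (∫ x in cube d, F x) := by
        rw [← ContinuousLinearMap.integral_comp_comm L hInt]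
        rfl
      rw [h1, ← hcomb, map_sum]
      exact Finset.sum_congr rfl fun k _ => by rw [ContinuousLinearMap.map_smul]; rfl
    rw [lhs, rhs]
  · intro β hβ g hgm hgb
    obtain ⟨C, hC⟩ := hgb
    have hzc : z ∈ cube d := hptc i₀
    have habsf : ∀ y : Fin d → ℝ, |∑ i, Real.cos (2 * Real.pi * (y i - z i))| ≤ (d:ℝ) := by
      intro y
      calc |∑ i, Real.cos (2 * Real.pi * (y i - z i))|
          ≤ ∑ i, |Real.cos (2 * Real.pi * (y i - z i))| := Finset.abs_sum_le_sum_abs _ _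
        _ ≤ ∑ _i : Fin d, (1:ℝ) := Finset.sum_le_sum (fun i _ => Real.abs_cos_le_one _)
        _ = d := by simp
    have hbdd : BddAbove (Set.range fun x : cube d =>
        |g x.1 - β * ∑ i, Real.cos (2 * Real.pi * (x.1 i - z i))|) := by
      refine ⟨C + β * d, ?_⟩
      rintro _ ⟨x, rfl⟩
      have h1 := habsf x.1
      have h2 := hC x.1
      have h3 : |g x.1 - β * ∑ i, Real.cos (2 * Real.pi * (x.1 i - z i))|
          ≤ |g x.1| + |β * ∑ i, Real.cos (2 * Real.pi * (x.1 i - z i))| := abs_sub _ _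
      have h4 : |β * ∑ i, Real.cos (2 * Real.pi * (x.1 i - z i))|
          = β * |∑ i, Real.cos (2 * Real.pi * (x.1 i - z i))| := by
        rw [abs_mul, abs_of_pos hβ]
      nlinarith
    set M := ⨆ x : cube d, |g x.1 - β * ∑ i, Real.cos (2 * Real.pi * (x.1 i - z i))| with hM
    have hMz : |g z - β * ∑ i, Real.cos (2 * Real.pi * (z i - z i))| ≤ M :=
      le_ciSup hbdd (⟨z, hzc⟩ : cube d)
    have hfz : (∑ i, Real.cos (2 * Real.pi * (z i - z i))) = (d:ℝ) := by
      have : ∀ i : Fin d, Real.cos (2 * Real.pi * (z i - z i)) = 1 := by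
        intro i; rw [sub_self, mul_zero, Real.cos_zero]
      rw [Finset.sum_congr rfl (fun i _ => this i)]
      simp
    rw [hfz] at hMz
    have hgz : β * (d:ℝ) - M ≤ g z := by
      have := (abs_le.1 hMz).1
      linarith
    -- the atomic integral of exp ∘ g
    have hA : (∫ x, Real.exp (g x) ∂(∑ i : ι, ENNReal.ofReal (w i) • Measure.dirac (pt i)))
        = ∑ k : ι, w k • Real.exp (g (pt k)) :=
      integral_atomic w (fun i => (hwpos i).le) pt _
    have hAge : w i₀ * Real.exp (g z) ≤ ∑ k : ι, w k • Real.exp (g (pt k)) := by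
      have := Finset.single_le_sum
        (f := fun k => w k • Real.exp (g (pt k)))
        (fun k _ => smul_nonneg (hwpos k).le (Real.exp_pos _).le) (Finset.mem_univ i₀)
      simpa [smul_eq_mul] using this
    have hApos : (0:ℝ) < ∑ k : ι, w k • Real.exp (g (pt k)) :=
      lt_of_lt_of_le (mul_pos (hwpos i₀) (Real.exp_pos _)) hAge
    -- bounds on B
    have hBle := cubeBound hβ z
    have hBpos : (0:ℝ) < ∫ x in cube d, Real.exp (β * ∑ i, Real.cos (2 * Real.pi * (x i - z i))) :=
      lt_of_lt_of_le (Real.exp_pos _) (cubePos hβ z)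
    -- logs
    have hlogA : Real.log (w i₀) + g z
        ≤ Real.log (∑ k : ι, w k • Real.exp (g (pt k))) := by
      have h1 : Real.log (w i₀ * Real.exp (g z)) ≤ Real.log (∑ k : ι, w k • Real.exp (g (pt k))) :=
        Real.log_le_log (mul_pos (hwpos i₀) (Real.exp_pos _)) hAge
      rwa [Real.log_mul (hwpos i₀).ne' (Real.exp_pos _).ne', Real.log_exp] at h1
    have hlogw : -Real.log (2*(n:ℝ)+1) ≤ Real.log (w i₀) := by
      have h1 : Real.log ((1:ℝ)/(2*(n:ℝ)+1)) ≤ Real.log (w i₀) :=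
        Real.log_le_log (by positivity) hwi₀
      rwa [one_div, Real.log_inv] at h1
    have hlogB : Real.log (∫ x in cube d, Real.exp (β * ∑ i, Real.cos (2 * Real.pi * (x i - z i))))
        ≤ β * d - ((d:ℝ)/2) * Real.log β := by
      have h1 := Real.log_le_log hBpos hBle
      rw [Real.log_pow, Real.log_mul (Real.exp_ne_zero _) (Real.rpow_pos_of_pos hβ _).ne',
        Real.log_exp, Real.log_rpow hβ] at h1
      calc Real.log (∫ x in cube d, Real.exp (β * ∑ i, Real.cos (2 * Real.pi * (x i - z i))))
          ≤ (d:ℝ) * (β + -(1:ℝ)/2 * Real.log β) := h1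
        _ = β * d - ((d:ℝ)/2) * Real.log β := by ring
    have hLHS : Real.log (β ^ ((d:ℝ)/2) / (2*(n:ℝ)+1))
        = ((d:ℝ)/2) * Real.log β - Real.log (2*(n:ℝ)+1) := by
      rw [Real.log_div (Real.rpow_pos_of_pos hβ _).ne' (by positivity), Real.log_rpow hβ]
    rw [hA, hLHS]
    linarith
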